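/- arXiv:1905.07509 — 3 statements merged into one kernel-verified Lean document; each statement's English description precedes it below -/
import Mathlib

section
/- For every even n ≥ 0, the Φ-generalized powers are Φ-symmetric conjugate under permutation of arguments: X̃^(n)(x₀,x) = X^(n)(x,x₀). -/
noncomputable def genX (Φ : ℝ → ℂ) : ℕ → ℝ → ℝ → ℂ
  | 0 => fun _ _ => 1
  | n + 1 => fun x₀ x =>
      (n + 1 : ℕ) * ∫ ξ in x₀..x, genX Φ n x₀ ξ * Φ ξ ^ ((-1 : ℤ) ^ (n + 1))

noncomputable def genXt (Φ : ℝ → ℂ) : ℕ → ℝ → ℝ → ℂ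
  | 0 => fun _ _ => 1
  | n + 1 => fun x₀ x =>
      (n + 1 : ℕ) * ∫ ξ in x₀..x, genXt Φ n x₀ ξ * Φ ξ ^ (-((-1 : ℤ) ^ (n + 1)))

open MeasureTheory Set intervalIntegral
set_option maxHeartbeats 1000000

lemma triangle_swap_le (f : ℝ → ℝ → ℂ) (hf : Continuous (Function.uncurry f))
    (x y : ℝ) (hxy : x ≤ y) :
    ∫ ξ in x..y, ∫ t in x..ξ, f t ξ = ∫ t in x..y, ∫ ξ in t..y, f t ξ := by
  set μ := volume.restrict (Ioc x y) with hμ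
  set F : ℝ → ℝ → ℂ := fun t ξ => (Ioi t).indicator (f t) ξ with hF
  have hFind : Function.uncurry F = ({p : ℝ × ℝ | p.1 < p.2}).indicator (Function.uncurry f) := by
    ext p
    simp [hF, Function.uncurry, Set.indicator_apply]
  have hmeas : MeasurableSet {p : ℝ × ℝ | p.1 < p.2} := measurableSet_lt measurable_fst measurable_snd
  have hint : Integrable (Function.uncurry F) (μ.prod μ) := by
    rw [hμ, Measure.prod_restrict, hFind]
    have h1 : IntegrableOn (Function.uncurry f) (Icc x y ×ˢ Icc x y) (volume.prod volume) := by
      have h2 : IntegrableOn (Function.uncurry f) (Icc x y ×ˢ Icc x y) (volume : Measure (ℝ × ℝ)) :=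
        ContinuousOn.integrableOn_compact (isCompact_Icc.prod isCompact_Icc) hf.continuousOn
      rwa [Measure.volume_eq_prod] at h2
    exact (h1.mono_set (Set.prod_mono Ioc_subset_Icc_self Ioc_subset_Icc_self)).indicator hmeas
  have swap : ∫ ξ, (∫ t, F t ξ ∂μ) ∂μ = ∫ t, (∫ ξ, F t ξ ∂μ) ∂μ := by
    exact (MeasureTheory.integral_integral_swap hint).symm
  calc ∫ ξ in x..y, ∫ t in x..ξ, f t ξ
      = ∫ ξ, (∫ t, F t ξ ∂μ) ∂μ := by
        rw [intervalIntegral.integral_of_le hxy]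
        refine setIntegral_congr_fun measurableSet_Ioc (fun ξ hξ => ?_) |>.symm
        have : (fun t => F t ξ) = (Iio ξ).indicator (fun t => f t ξ) := by
          ext t; simp [hF, Set.indicator_apply]
        rw [this, hμ, MeasureTheory.integral_indicator measurableSet_Iio,
          Measure.restrict_restrict measurableSet_Iio]
        have hset : Iio ξ ∩ Ioc x y = Ioo x ξ := by
          ext t
          simp only [mem_inter_iff, mem_Iio, mem_Ioc, mem_Ioo]
          constructor
          · rintro ⟨h1, h2, h3⟩; exact ⟨h2, h1⟩
          · rintro ⟨h1, h2⟩; exact ⟨h2, h1, h2.le.trans hξ.2⟩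
        rw [hset, intervalIntegral.integral_of_le hξ.1.le,
          MeasureTheory.integral_Ioc_eq_integral_Ioo]
    _ = ∫ t, (∫ ξ, F t ξ ∂μ) ∂μ := swap
    _ = ∫ t in x..y, ∫ ξ in t..y, f t ξ := by
        rw [intervalIntegral.integral_of_le hxy]
        refine setIntegral_congr_fun measurableSet_Ioc (fun t ht => ?_)
        rw [hF, hμ, MeasureTheory.integral_indicator measurableSet_Ioi,
          Measure.restrict_restrict measurableSet_Ioi]
        have hset : Ioi t ∩ Ioc x y = Ioc t y := by
          ext ξ
          simp only [mem_inter_iff, mem_Ioi, mem_Ioc]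
          constructor
          · rintro ⟨h1, _, h3⟩; exact ⟨h1, h3⟩
          · rintro ⟨h1, h2⟩; exact ⟨h1, ht.1.trans h1, h2⟩
        rw [hset, intervalIntegral.integral_of_le ht.2]

lemma triangle_swap (f : ℝ → ℝ → ℂ) (hf : Continuous (Function.uncurry f)) (x y : ℝ) :
    ∫ ξ in x..y, ∫ t in x..ξ, f t ξ = ∫ t in x..y, ∫ ξ in t..y, f t ξ := by
  rcases le_total x y with h | h
  · exact triangle_swap_le f hf x y h
  · have key : ∫ ξ in y..x, ∫ t in y..ξ, f ξ t = ∫ t in y..x, ∫ ξ in t..x, f ξ t :=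
      triangle_swap_le (fun t ξ => f ξ t) (by
        have : (Function.uncurry fun t ξ => f ξ t) = (Function.uncurry f) ∘ Prod.swap := rfl
        rw [this]; exact hf.comp continuous_swap) y x h
    have lhs : ∫ ξ in x..y, ∫ t in x..ξ, f t ξ = ∫ ξ in y..x, ∫ t in ξ..x, f t ξ := by
      calc ∫ ξ in x..y, ∫ t in x..ξ, f t ξ
          = -∫ ξ in y..x, ∫ t in x..ξ, f t ξ := intervalIntegral.integral_symm y x
        _ = -∫ ξ in y..x, -∫ t in ξ..x, f t ξ := by
            congr 1
            exact intervalIntegral.integral_congr fun ξ _ => intervalIntegral.integral_symm ξ x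
        _ = ∫ ξ in y..x, ∫ t in ξ..x, f t ξ := by rw [intervalIntegral.integral_neg, neg_neg]
    have rhs : ∫ t in x..y, ∫ ξ in t..y, f t ξ = ∫ t in y..x, ∫ ξ in y..t, f t ξ := by
      rw [intervalIntegral.integral_symm y x, neg_eq_iff_eq_neg, ← intervalIntegral.integral_neg]
      exact intervalIntegral.integral_congr fun t _ => by
        rw [intervalIntegral.integral_symm y t]
    rw [lhs, rhs]
    exact key.symm


lemma genX_succ (Φ : ℝ → ℂ) (n : ℕ) (x₀ x : ℝ) :
    genX Φ (n+1) x₀ x = (n + 1 : ℕ) * ∫ ξ in x₀..x, genX Φ n x₀ ξ * Φ ξ ^ ((-1 : ℤ) ^ (n + 1)) := rfl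

lemma genXt_succ (Φ : ℝ → ℂ) (n : ℕ) (x₀ x : ℝ) :
    genXt Φ (n+1) x₀ x = (n + 1 : ℕ) * ∫ ξ in x₀..x, genXt Φ n x₀ ξ * Φ ξ ^ (-((-1 : ℤ) ^ (n + 1))) := rfl

lemma cont_aux (g : ℝ → ℝ → ℂ) (hg : Continuous (Function.uncurry g)) (c : ℂ) :
    Continuous fun p : ℝ × ℝ => c * ∫ ξ in p.1..p.2, g p.1 ξ := by
  have hG : Continuous (Function.uncurry fun (p : ℝ × ℝ) ξ => g p.1 ξ) :=
    hg.comp (continuous_fst.fst.prodMk continuous_snd)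
  have h1 : Continuous fun p : ℝ × ℝ => ∫ ξ in (0:ℝ)..p.2, g p.1 ξ :=
    intervalIntegral.continuous_parametric_intervalIntegral_of_continuous hG continuous_snd
  have h2 : Continuous fun p : ℝ × ℝ => ∫ ξ in (0:ℝ)..p.1, g p.1 ξ :=
    intervalIntegral.continuous_parametric_intervalIntegral_of_continuous hG continuous_fst
  have heq : ∀ p : ℝ × ℝ,
      c * ((∫ ξ in (0:ℝ)..p.2, g p.1 ξ) - ∫ ξ in (0:ℝ)..p.1, g p.1 ξ)
        = c * ∫ ξ in p.1..p.2, g p.1 ξ := by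
    intro p
    have hgp : Continuous (g p.1) := hg.comp (continuous_const.prodMk continuous_id)
    rw [intervalIntegral.integral_interval_sub_left (hgp.intervalIntegrable _ _)
      (hgp.intervalIntegrable _ _)]
  exact (continuous_const.mul (h1.sub h2)).congr heq

lemma genX_cont (Ψ : ℝ → ℂ) (hc : Continuous Ψ) (h0 : ∀ t, Ψ t ≠ 0) (n : ℕ) :
    Continuous (fun p : ℝ × ℝ => genX Ψ n p.1 p.2)
      ∧ Continuous (fun p : ℝ × ℝ => genXt Ψ n p.1 p.2) := by
  have hz : ∀ e : ℤ, Continuous fun ξ => Ψ ξ ^ e := fun e =>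
    hc.zpow₀ e (fun t => Or.inl (h0 t))
  induction n with
  | zero => exact ⟨continuous_const, continuous_const⟩
  | succ n ih =>
    constructor
    · have := cont_aux (fun u ξ => genX Ψ n u ξ * Ψ ξ ^ ((-1:ℤ)^(n+1)))
        ((ih.1.comp (continuous_fst.prodMk continuous_snd)).mul ((hz _).comp continuous_snd))
        ((n+1 : ℕ) : ℂ)
      exact this.congr fun p => by rw [genX]
    · have := cont_aux (fun u ξ => genXt Ψ n u ξ * Ψ ξ ^ (-((-1:ℤ)^(n+1))))
        ((ih.2.comp (continuous_fst.prodMk continuous_snd)).mul ((hz _).comp continuous_snd))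
        ((n+1 : ℕ) : ℂ)
      exact this.congr fun p => by rw [genXt]

lemma genX_dual (Ψ : ℝ → ℂ) (hc : Continuous Ψ) (h0 : ∀ t, Ψ t ≠ 0) (n : ℕ) (x y : ℝ) :
    genX Ψ (n+1) x y = ((n+1 : ℕ) : ℂ) * ∫ t in x..y, (Ψ t)⁻¹ * genXt Ψ n t y := by
  have hz : ∀ e : ℤ, Continuous fun ξ => Ψ ξ ^ e := fun e =>
    hc.zpow₀ e (fun t => Or.inl (h0 t))
  induction n generalizing x y with
  | zero =>
    rw [genX_succ]
    congr 1
    refine intervalIntegral.integral_congr fun ξ _ => ?_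
    simp [genX, genXt, zpow_neg]
  | succ n ih =>
    have e2 : ((-1:ℤ)^(n+1+1)) = -((-1:ℤ)^(n+1)) := by rw [pow_succ]; ring
    rw [genX_succ]
    have s1 : ∫ ξ in x..y, genX Ψ (n+1) x ξ * Ψ ξ ^ ((-1:ℤ)^(n+1+1))
        = ((n+1:ℕ):ℂ) * ∫ ξ in x..y, ∫ t in x..ξ,
            ((Ψ t)⁻¹ * genXt Ψ n t ξ) * Ψ ξ ^ ((-1:ℤ)^(n+1+1)) := by
      rw [← intervalIntegral.integral_const_mul]
      refine intervalIntegral.integral_congr fun ξ _ => ?_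
      rw [ih x ξ, mul_assoc, ← intervalIntegral.integral_mul_const]
    rw [s1]
    have hcont : Continuous (Function.uncurry fun t ξ =>
        ((Ψ t)⁻¹ * genXt Ψ n t ξ) * Ψ ξ ^ ((-1:ℤ)^(n+1+1))) :=
      ((((hc.inv₀ h0).comp continuous_fst).mul (genX_cont Ψ hc h0 n).2).mul
        ((hz _).comp continuous_snd))
    rw [triangle_swap _ hcont x y]
    have hrhs : ∫ t in x..y, (Ψ t)⁻¹ * genXt Ψ (n+1) t y
        = ((n+1:ℕ):ℂ) * ∫ t in x..y, ∫ ξ in t..y,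
            ((Ψ t)⁻¹ * genXt Ψ n t ξ) * Ψ ξ ^ ((-1:ℤ)^(n+1+1)) := by
      rw [← intervalIntegral.integral_const_mul]
      refine intervalIntegral.integral_congr fun t _ => ?_
      rw [genXt_succ]
      have hin : ∀ ξ, ((Ψ t)⁻¹ * genXt Ψ n t ξ) * Ψ ξ ^ ((-1:ℤ)^(n+1+1))
          = (Ψ t)⁻¹ * (genXt Ψ n t ξ * Ψ ξ ^ (-((-1:ℤ)^(n+1)))) := fun ξ => by
        rw [e2, mul_assoc]
      rw [intervalIntegral.integral_congr fun ξ _ => hin ξ,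
        intervalIntegral.integral_const_mul, mul_left_comm]
    rw [hrhs]

lemma genXt_dual (Ψ : ℝ → ℂ) (hc : Continuous Ψ) (h0 : ∀ t, Ψ t ≠ 0) (n : ℕ) (x y : ℝ) :
    genXt Ψ (n+1) x y = ((n+1 : ℕ) : ℂ) * ∫ t in x..y, Ψ t * genX Ψ n t y := by
  have hz : ∀ e : ℤ, Continuous fun ξ => Ψ ξ ^ e := fun e =>
    hc.zpow₀ e (fun t => Or.inl (h0 t))
  induction n generalizing x y with
  | zero =>
    rw [genXt_succ]
    congr 1
    refine intervalIntegral.integral_congr fun ξ _ => ?_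
    simp [genX, genXt]
  | succ n ih =>
    have e2 : (-((-1:ℤ)^(n+1+1))) = ((-1:ℤ)^(n+1)) := by rw [pow_succ]; ring
    rw [genXt_succ]
    have s1 : ∫ ξ in x..y, genXt Ψ (n+1) x ξ * Ψ ξ ^ (-((-1:ℤ)^(n+1+1)))
        = ((n+1:ℕ):ℂ) * ∫ ξ in x..y, ∫ t in x..ξ,
            (Ψ t * genX Ψ n t ξ) * Ψ ξ ^ (-((-1:ℤ)^(n+1+1))) := by
      rw [← intervalIntegral.integral_const_mul]
      refine intervalIntegral.integral_congr fun ξ _ => ?_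
      rw [ih x ξ, mul_assoc, ← intervalIntegral.integral_mul_const]
    rw [s1]
    have hcont : Continuous (Function.uncurry fun t ξ =>
        (Ψ t * genX Ψ n t ξ) * Ψ ξ ^ (-((-1:ℤ)^(n+1+1)))) :=
      (((hc.comp continuous_fst).mul (genX_cont Ψ hc h0 n).1).mul
        ((hz _).comp continuous_snd))
    rw [triangle_swap _ hcont x y]
    have hrhs : ∫ t in x..y, Ψ t * genX Ψ (n+1) t y
        = ((n+1:ℕ):ℂ) * ∫ t in x..y, ∫ ξ in t..y,
            (Ψ t * genX Ψ n t ξ) * Ψ ξ ^ (-((-1:ℤ)^(n+1+1))) := by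
      rw [← intervalIntegral.integral_const_mul]
      refine intervalIntegral.integral_congr fun t _ => ?_
      rw [genX_succ]
      have hin : ∀ ξ, (Ψ t * genX Ψ n t ξ) * Ψ ξ ^ (-((-1:ℤ)^(n+1+1)))
          = Ψ t * (genX Ψ n t ξ * Ψ ξ ^ ((-1:ℤ)^(n+1))) := fun ξ => by
        rw [e2, mul_assoc]
      rw [intervalIntegral.integral_congr fun ξ _ => hin ξ,
        intervalIntegral.integral_const_mul, mul_left_comm]
    rw [hrhs]

lemma genXt_symm (Ψ : ℝ → ℂ) (hc : Continuous Ψ) (h0 : ∀ t, Ψ t ≠ 0) (n : ℕ) :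
    (∀ x y, Even n → genXt Ψ n x y = genX Ψ n y x) ∧
    (∀ x y, Odd n → genXt Ψ n x y = - genXt Ψ n y x) := by
  induction n with
  | zero =>
    refine ⟨fun x y _ => rfl, fun x y h => absurd h (by simp)⟩
  | succ n ih =>
    constructor
    · intro x y hev
      have hodd : Odd n := Nat.not_even_iff_odd.mp (Nat.even_add_one.mp hev)
      have hexp : -((-1:ℤ)^(n+1)) = -1 := by rw [hev.neg_one_pow]
      rw [genXt_succ, genX_dual Ψ hc h0 n y x]
      congr 1
      calc ∫ ξ in x..y, genXt Ψ n x ξ * Ψ ξ ^ (-((-1:ℤ)^(n+1)))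
          = ∫ ξ in x..y, -((Ψ ξ)⁻¹ * genXt Ψ n ξ x) := by
            refine intervalIntegral.integral_congr fun ξ _ => ?_
            rw [hexp, zpow_neg_one, ih.2 x ξ hodd]
            ring
        _ = -∫ ξ in x..y, (Ψ ξ)⁻¹ * genXt Ψ n ξ x := intervalIntegral.integral_neg
        _ = ∫ t in y..x, (Ψ t)⁻¹ * genXt Ψ n t x := (intervalIntegral.integral_symm x y).symm
    · intro x y hodd'
      have hev : Even n := by
        rcases Nat.even_or_odd n with h | h
        · exact h
        · exact absurd hodd' (by simpa [Nat.not_odd_iff_even] using h.add_one)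
      have hexp : -((-1:ℤ)^(n+1)) = 1 := by rw [hodd'.neg_one_pow]; ring
      rw [genXt_succ, genXt_dual Ψ hc h0 n y x]
      rw [show -(((n+1:ℕ):ℂ) * ∫ t in y..x, Ψ t * genX Ψ n t x)
          = ((n+1:ℕ):ℂ) * ∫ t in x..y, Ψ t * genX Ψ n t x from by
        rw [← mul_neg, ← intervalIntegral.integral_symm y x]]
      congr 1
      refine intervalIntegral.integral_congr fun ξ _ => ?_
      rw [hexp, zpow_one, ih.1 x ξ hev]
      ring

theorem stmt_1 (a b : ℝ) (Φ : ℝ → ℂ) (hΦc : ContinuousOn Φ (Set.Icc a b))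
    (hΦ0 : ∀ y ∈ Set.Icc a b, Φ y ≠ 0) (x₀ x : ℝ)
    (hx₀ : x₀ ∈ Set.Icc a b) (hx : x ∈ Set.Icc a b) (n : ℕ) (hn : Even n) :
    genXt Φ n x₀ x = genX Φ n x x₀ := by
  have hab : a ≤ b := hx₀.1.trans hx₀.2
  have hcm : ∀ t : ℝ, min b (max a t) ∈ Set.Icc a b := fun t =>
    ⟨le_min hab (le_max_left a t), min_le_left _ _⟩
  have hcid : ∀ t ∈ Set.Icc a b, min b (max a t) = t := fun t ht => by
    rw [max_eq_right ht.1, min_eq_right ht.2]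
  set Ψ : ℝ → ℂ := fun t => Φ (min b (max a t)) with hΨdef
  have hΨΦ : ∀ t ∈ Set.Icc a b, Ψ t = Φ t := fun t ht => by
    rw [hΨdef]; exact congrArg Φ (hcid t ht)
  have hΨc : Continuous Ψ :=
    hΦc.comp_continuous (continuous_const.min (continuous_const.max continuous_id)) hcm
  have hΨ0 : ∀ t, Ψ t ≠ 0 := fun t => hΦ0 _ (hcm t)
  have hagree : ∀ m : ℕ, ∀ u ∈ Set.Icc a b, ∀ v ∈ Set.Icc a b,
      genX Φ m u v = genX Ψ m u v ∧ genXt Φ m u v = genXt Ψ m u v := by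
    intro m
    induction m with
    | zero => exact fun u _ v _ => ⟨rfl, rfl⟩
    | succ m ih =>
      intro u hu v hv
      have hsub : Set.uIcc u v ⊆ Set.Icc a b := by
        rw [← Set.uIcc_of_le hab] at hu hv ⊢; exact Set.uIcc_subset_uIcc hu hv
      constructor
      · rw [genX_succ, genX_succ]
        congr 1
        refine intervalIntegral.integral_congr fun ξ hξ => ?_
        have hξ' := hsub hξ
        rw [(ih u hu ξ hξ').1, hΨΦ ξ hξ']
      · rw [genXt_succ, genXt_succ]
        congr 1
        refine intervalIntegral.integral_congr fun ξ hξ => ?_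
        have hξ' := hsub hξ
        rw [(ih u hu ξ hξ').2, hΨΦ ξ hξ']
  rw [(hagree n x₀ hx₀ x hx).2, (genXt_symm Ψ hΨc hΨ0 n).1 x₀ x hn]
  exact (hagree n x hx x₀ hx₀).1.symm
end

section
/- For every finite even n ≥ 2 and all x₀, x ∈ [a,b], the Φ-generalized powers satisfy the binomial identity ∑_{k=0}^n (−1)^k C(n,k) X^(k)(x₀,x) X̃^(n−k)(x₀,x) = 0. -/
open Set intervalIntegral

section aux

variable {Ψ : ℝ → ℂ}

private lemma primitive_hasDerivAt {g : ℝ → ℂ} (hg : Continuous g) (x₀ x : ℝ) :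
    HasDerivAt (fun y => ∫ t in x₀..y, g t) (g x) x :=
  integral_hasDerivAt_right (hg.intervalIntegrable x₀ x)
    hg.stronglyMeasurable.stronglyMeasurableAtFilter hg.continuousAt

private lemma zpow_cont (hΨ : Continuous Ψ) (h0 : ∀ y, Ψ y ≠ 0) (m : ℤ) :
    Continuous fun y => Ψ y ^ m :=
  continuous_iff_continuousAt.2 fun y =>
    (continuousAt_zpow₀ (Ψ y) m (Or.inl (h0 y))).comp hΨ.continuousAt

private lemma genX_cont_s4 (hΨ : Continuous Ψ) (h0 : ∀ y, Ψ y ≠ 0) (n : ℕ) (x₀ : ℝ) :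
    Continuous (genX Ψ n x₀) := by
  induction n with
  | zero => exact continuous_const
  | succ n ih =>
    have hint : Continuous fun ξ => genX Ψ n x₀ ξ * Ψ ξ ^ ((-1 : ℤ) ^ (n + 1)) :=
      ih.mul (zpow_cont hΨ h0 _)
    show Continuous fun x => ((n + 1 : ℕ) : ℂ) * ∫ ξ in x₀..x, _
    exact continuous_const.mul
      (continuous_iff_continuousAt.2 fun x => (primitive_hasDerivAt hint x₀ x).continuousAt)

private lemma genXt_cont (hΨ : Continuous Ψ) (h0 : ∀ y, Ψ y ≠ 0) (n : ℕ) (x₀ : ℝ) :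
    Continuous (genXt Ψ n x₀) := by
  induction n with
  | zero => exact continuous_const
  | succ n ih =>
    have hint : Continuous fun ξ => genXt Ψ n x₀ ξ * Ψ ξ ^ (-((-1 : ℤ) ^ (n + 1))) :=
      ih.mul (zpow_cont hΨ h0 _)
    show Continuous fun x => ((n + 1 : ℕ) : ℂ) * ∫ ξ in x₀..x, _
    exact continuous_const.mul
      (continuous_iff_continuousAt.2 fun x => (primitive_hasDerivAt hint x₀ x).continuousAt)

private lemma genX_hasDerivAt (hΨ : Continuous Ψ) (h0 : ∀ y, Ψ y ≠ 0) (n : ℕ) (x₀ x : ℝ) :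
    HasDerivAt (genX Ψ n x₀)
      ((n : ℂ) * (genX Ψ (n - 1) x₀ x * Ψ x ^ ((-1 : ℤ) ^ n))) x := by
  cases n with
  | zero => rw [Nat.cast_zero, zero_mul]; exact hasDerivAt_const x (1 : ℂ)
  | succ n =>
    have hint : Continuous fun ξ => genX Ψ n x₀ ξ * Ψ ξ ^ ((-1 : ℤ) ^ (n + 1)) :=
      (genX_cont_s4 hΨ h0 n x₀).mul (zpow_cont hΨ h0 _)
    have h := (primitive_hasDerivAt hint x₀ x).const_mul ((n + 1 : ℕ) : ℂ)
    simpa [genX] using h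

private lemma genXt_hasDerivAt (hΨ : Continuous Ψ) (h0 : ∀ y, Ψ y ≠ 0) (n : ℕ) (x₀ x : ℝ) :
    HasDerivAt (genXt Ψ n x₀)
      ((n : ℂ) * (genXt Ψ (n - 1) x₀ x * Ψ x ^ (-((-1 : ℤ) ^ n)))) x := by
  cases n with
  | zero => rw [Nat.cast_zero, zero_mul]; exact hasDerivAt_const x (1 : ℂ)
  | succ n =>
    have hint : Continuous fun ξ => genXt Ψ n x₀ ξ * Ψ ξ ^ (-((-1 : ℤ) ^ (n + 1))) :=
      (genXt_cont hΨ h0 n x₀).mul (zpow_cont hΨ h0 _)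
    have h := (primitive_hasDerivAt hint x₀ x).const_mul ((n + 1 : ℕ) : ℂ)
    simpa [genXt] using h

private lemma parity_lemma {n k : ℕ} (hn : Even n) (hk : k < n) :
    ((-1 : ℤ) ^ (k + 1)) = -((-1 : ℤ) ^ (n - k)) := by
  have h : Even (n - k) ↔ (Even n ↔ Even k) := Nat.even_sub hk.le
  rcases Nat.even_or_odd k with hke | hko
  · have h1 : Even (n - k) := h.2 (iff_of_true hn hke)
    have h2 : Odd (k + 1) := Even.add_one hke
    rw [h1.neg_one_pow, h2.neg_one_pow]
  · have h1 : ¬ Even (n - k) := fun he => (Nat.not_even_iff_odd.2 hko) ((h.1 he).1 hn)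
    have h1' : Odd (n - k) := Nat.not_even_iff_odd.1 h1
    have h2 : Even (k + 1) := Odd.add_one hko
    rw [h1'.neg_one_pow, h2.neg_one_pow, neg_neg]

private lemma key (hΨ : Continuous Ψ) (h0 : ∀ y, Ψ y ≠ 0) (x₀ : ℝ) (n : ℕ)
    (hn : Even n) (hpos : 0 < n) (x : ℝ) :
    ∑ k ∈ Finset.range (n + 1),
      (-1 : ℂ) ^ k * (n.choose k : ℂ) * genX Ψ k x₀ x * genXt Ψ (n - k) x₀ x = 0 := by
  set S : ℝ → ℂ := fun y => ∑ k ∈ Finset.range (n + 1),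
      (-1 : ℂ) ^ k * (n.choose k : ℂ) * (genX Ψ k x₀ y * genXt Ψ (n - k) x₀ y) with hS
  have hderiv : ∀ y, HasDerivAt S 0 y := by
    intro y
    have hterm : ∀ k ∈ Finset.range (n + 1),
        HasDerivAt (fun y => (-1 : ℂ) ^ k * (n.choose k : ℂ) *
            (genX Ψ k x₀ y * genXt Ψ (n - k) x₀ y))
          ((-1 : ℂ) ^ k * (n.choose k : ℂ) *
            (((k : ℂ) * (genX Ψ (k - 1) x₀ y * Ψ y ^ ((-1 : ℤ) ^ k))) * genXt Ψ (n - k) x₀ y +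
             genX Ψ k x₀ y *
               (((n - k : ℕ) : ℂ) * (genXt Ψ (n - k - 1) x₀ y * Ψ y ^ (-((-1 : ℤ) ^ (n - k))))))) y := by
      intro k _
      exact ((genX_hasDerivAt hΨ h0 k x₀ y).mul (genXt_hasDerivAt hΨ h0 (n - k) x₀ y)).const_mul _
    have hsum := HasDerivAt.fun_sum hterm
    have hz : (∑ k ∈ Finset.range (n + 1),
        (-1 : ℂ) ^ k * (n.choose k : ℂ) *
          (((k : ℂ) * (genX Ψ (k - 1) x₀ y * Ψ y ^ ((-1 : ℤ) ^ k))) * genXt Ψ (n - k) x₀ y +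
           genX Ψ k x₀ y *
             (((n - k : ℕ) : ℂ) * (genXt Ψ (n - k - 1) x₀ y * Ψ y ^ (-((-1 : ℤ) ^ (n - k))))))) = 0 := by
      rw [Finset.sum_congr rfl (fun k _ => mul_add ((-1 : ℂ) ^ k * (n.choose k : ℂ)) _ _),
        Finset.sum_add_distrib]
      have hA : (∑ k ∈ Finset.range (n + 1),
          (-1 : ℂ) ^ k * (n.choose k : ℂ) *
            (((k : ℂ) * (genX Ψ (k - 1) x₀ y * Ψ y ^ ((-1 : ℤ) ^ k))) * genXt Ψ (n - k) x₀ y))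
          = ∑ k ∈ Finset.range n,
          (-1 : ℂ) ^ (k + 1) * (n.choose (k + 1) : ℂ) *
            ((((k + 1 : ℕ) : ℂ) * (genX Ψ k x₀ y * Ψ y ^ ((-1 : ℤ) ^ (k + 1)))) *
              genXt Ψ (n - (k + 1)) x₀ y) := by
        rw [Finset.sum_range_succ']
        simp
      have hB : (∑ k ∈ Finset.range (n + 1),
          (-1 : ℂ) ^ k * (n.choose k : ℂ) *
            (genX Ψ k x₀ y *
              (((n - k : ℕ) : ℂ) * (genXt Ψ (n - k - 1) x₀ y * Ψ y ^ (-((-1 : ℤ) ^ (n - k)))))))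
          = ∑ k ∈ Finset.range n,
          (-1 : ℂ) ^ k * (n.choose k : ℂ) *
            (genX Ψ k x₀ y *
              (((n - k : ℕ) : ℂ) * (genXt Ψ (n - k - 1) x₀ y * Ψ y ^ (-((-1 : ℤ) ^ (n - k)))))) := by
        rw [Finset.sum_range_succ]
        simp
      rw [hA, hB, ← Finset.sum_add_distrib]
      apply Finset.sum_eq_zero
      intro k hk
      have hklt : k < n := Finset.mem_range.1 hk
      have he : Ψ y ^ ((-1 : ℤ) ^ (k + 1)) = Ψ y ^ (-((-1 : ℤ) ^ (n - k))) := by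
        rw [parity_lemma hn hklt]
      have hch : ((n.choose (k + 1) : ℕ) : ℂ) * ((k + 1 : ℕ) : ℂ)
          = ((n.choose k : ℕ) : ℂ) * ((n - k : ℕ) : ℂ) := by
        exact_mod_cast congrArg (fun m : ℕ => (m : ℂ)) (Nat.choose_succ_right_eq n k)
      have hsub : n - (k + 1) = n - k - 1 := (Nat.sub_sub n k 1).symm
      rw [he, hsub]
      push_cast at hch ⊢
      linear_combination (-((-1 : ℂ) ^ k) * genX Ψ k x₀ y * genXt Ψ (n - k - 1) x₀ y *
        Ψ y ^ (-((-1 : ℤ) ^ (n - k)))) * hch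
    rw [← hz]
    exact hsum
  have hconst : S x = S x₀ :=
    is_const_of_deriv_eq_zero (fun y => (hderiv y).differentiableAt)
      (fun y => (hderiv y).deriv) x x₀
  have hx0 : S x₀ = 0 := by
    rw [hS]
    apply Finset.sum_eq_zero
    intro k hk
    cases k with
    | zero =>
      obtain ⟨m, rfl⟩ : ∃ m, n = m + 1 := ⟨n - 1, (Nat.succ_pred_eq_of_pos hpos).symm⟩
      simp [genXt, intervalIntegral.integral_same]
    | succ k =>
      simp [genX, intervalIntegral.integral_same]
  have : S x = 0 := hconst.trans hx0
  simpa [hS, mul_assoc] using this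

private lemma genX_congr {Φ Ψ : ℝ → ℂ} {a b : ℝ} (hab : a ≤ b) (h : EqOn Φ Ψ (Icc a b))
    {x₀ : ℝ} (hx₀ : x₀ ∈ Icc a b) (k : ℕ) :
    ∀ x ∈ Icc a b, genX Φ k x₀ x = genX Ψ k x₀ x := by
  induction k with
  | zero => intro x _; rfl
  | succ k ih =>
    intro x hx
    show ((k + 1 : ℕ) : ℂ) * _ = ((k + 1 : ℕ) : ℂ) * _
    congr 1
    apply intervalIntegral.integral_congr
    intro ξ hξ
    have hξ' : ξ ∈ Icc a b := by
      have : uIcc x₀ x ⊆ Icc a b := by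
        rw [← uIcc_of_le hab]
        exact uIcc_subset_uIcc (Icc_subset_uIcc hx₀) (Icc_subset_uIcc hx)
      exact this hξ
    simp only [ih ξ hξ', h hξ']

private lemma genXt_congr {Φ Ψ : ℝ → ℂ} {a b : ℝ} (hab : a ≤ b) (h : EqOn Φ Ψ (Icc a b))
    {x₀ : ℝ} (hx₀ : x₀ ∈ Icc a b) (k : ℕ) :
    ∀ x ∈ Icc a b, genXt Φ k x₀ x = genXt Ψ k x₀ x := by
  induction k with
  | zero => intro x _; rfl
  | succ k ih =>
    intro x hx
    show ((k + 1 : ℕ) : ℂ) * _ = ((k + 1 : ℕ) : ℂ) * _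
    congr 1
    apply intervalIntegral.integral_congr
    intro ξ hξ
    have hξ' : ξ ∈ Icc a b := by
      have : uIcc x₀ x ⊆ Icc a b := by
        rw [← uIcc_of_le hab]
        exact uIcc_subset_uIcc (Icc_subset_uIcc hx₀) (Icc_subset_uIcc hx)
      exact this hξ
    simp only [ih ξ hξ', h hξ']

end aux

theorem stmt_4 (a b : ℝ) (Φ : ℝ → ℂ) (hΦc : ContinuousOn Φ (Set.Icc a b))
    (hΦ0 : ∀ y ∈ Set.Icc a b, Φ y ≠ 0) (x₀ x : ℝ)
    (hx₀ : x₀ ∈ Set.Icc a b) (hx : x ∈ Set.Icc a b) (n : ℕ) (hn : Even n)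
    (hn2 : 2 ≤ n) :
    ∑ k ∈ Finset.range (n + 1),
      (-1 : ℂ) ^ k * (n.choose k : ℂ) * genX Φ k x₀ x * genXt Φ (n - k) x₀ x = 0 := by
  have hab : a ≤ b := hx₀.1.trans hx₀.2
  set Ψ : ℝ → ℂ := fun y => Φ ((projIcc a b hab y : Set.Icc a b) : ℝ) with hΨdef
  have hEq : Set.EqOn Φ Ψ (Set.Icc a b) := by
    intro y hy
    simp [hΨdef, projIcc_of_mem hab hy]
  have hΨc : Continuous Ψ :=
    hΦc.comp_continuous (continuous_subtype_val.comp continuous_projIcc)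
      (fun y => (projIcc a b hab y).2)
  have hΨ0 : ∀ y, Ψ y ≠ 0 := fun y => hΦ0 _ (projIcc a b hab y).2
  have htrans : ∀ k ∈ Finset.range (n + 1),
      (-1 : ℂ) ^ k * (n.choose k : ℂ) * genX Φ k x₀ x * genXt Φ (n - k) x₀ x
        = (-1 : ℂ) ^ k * (n.choose k : ℂ) * genX Ψ k x₀ x * genXt Ψ (n - k) x₀ x := by
    intro k _
    rw [genX_congr hab hEq hx₀ k x hx, genXt_congr hab hEq hx₀ (n - k) x hx]
  rw [Finset.sum_congr rfl htrans]
  exact key hΨc hΨ0 x₀ n hn (lt_of_lt_of_le two_pos hn2) x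
end

section
/- For all n ≥ 1, the n-fold Volterra composition power of Φ·X^(1) satisfies (Φ X^(1))^{⟨n⟩}(x₀,x) = Φ(x) X^(2n−1)(x₀,x)/(2n−1)!, and composing with the constant function 1 gives ((Φ X^(1))^{⟨n⟩} ⋆ 1)(x₀,x) = X^(2n)(x₀,x)/(2n)!. -/
/-- Volterra composition of the first type. -/
noncomputable def volt (f g : ℝ → ℝ → ℂ) (x y : ℝ) : ℂ :=
  ∫ ξ in x..y, f x ξ * g ξ y

/-- `voltPow f k = f^{⟨k+1⟩}`: the `(k+1)`-fold Volterra composition power of `f`. -/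
noncomputable def voltPow (f : ℝ → ℝ → ℂ) : ℕ → ℝ → ℝ → ℂ
  | 0 => f
  | k + 1 => volt (voltPow f k) f

open intervalIntegral MeasureTheory Set

namespace S19

variable {Ψ : ℝ → ℂ}

lemma genX_succ (Ψ : ℝ → ℂ) (m : ℕ) (x₀ x : ℝ) :
    genX Ψ (m + 1) x₀ x
      = ((m + 1 : ℕ) : ℂ) * ∫ ξ in x₀..x, genX Ψ m x₀ ξ * Ψ ξ ^ ((-1 : ℤ) ^ (m + 1)) := rfl

lemma genX_zero (Ψ : ℝ → ℂ) (x₀ x : ℝ) : genX Ψ 0 x₀ x = 1 := rfl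

lemma cont_pow (hc : Continuous Ψ) (h0 : ∀ y, Ψ y ≠ 0) (m : ℕ) :
    Continuous fun ξ => Ψ ξ ^ ((-1 : ℤ) ^ m) := by
  rcases Nat.even_or_odd m with h | h
  · simpa [h.neg_one_pow] using hc
  · simp only [h.neg_one_pow, zpow_neg, zpow_one]
    exact hc.inv₀ h0

lemma genX_cont (hc : Continuous Ψ) (h0 : ∀ y, Ψ y ≠ 0) :
    ∀ m x₀, Continuous (genX Ψ m x₀) := by
  intro m
  induction m with
  | zero => intro x₀; exact continuous_const
  | succ m ih =>
    intro x₀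
    have hint : Continuous fun ξ => genX Ψ m x₀ ξ * Ψ ξ ^ ((-1 : ℤ) ^ (m + 1)) :=
      (ih x₀).mul (cont_pow hc h0 (m + 1))
    have h2 : Continuous fun x => ∫ ξ in x₀..x, genX Ψ m x₀ ξ * Ψ ξ ^ ((-1 : ℤ) ^ (m + 1)) :=
      continuous_iff_continuousAt.2 fun x =>
        ((hint.integral_hasStrictDerivAt x₀ x).hasDerivAt).continuousAt
    exact continuous_const.mul h2

lemma genX_hasDerivAt (hc : Continuous Ψ) (h0 : ∀ y, Ψ y ≠ 0) (m : ℕ) (x₀ x : ℝ) :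
    HasDerivAt (genX Ψ (m + 1) x₀)
      (((m + 1 : ℕ) : ℂ) * (genX Ψ m x₀ x * Ψ x ^ ((-1 : ℤ) ^ (m + 1)))) x := by
  have hint : Continuous fun ξ => genX Ψ m x₀ ξ * Ψ ξ ^ ((-1 : ℤ) ^ (m + 1)) :=
    (genX_cont hc h0 m x₀).mul (cont_pow hc h0 (m + 1))
  exact ((hint.integral_hasStrictDerivAt x₀ x).hasDerivAt).const_mul _

lemma genX_same (Ψ : ℝ → ℂ) (m : ℕ) (x₀ : ℝ) : genX Ψ (m + 1) x₀ x₀ = 0 := by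
  rw [genX_succ, integral_same, mul_zero]

lemma genX_one (Ψ : ℝ → ℂ) (x₀ x : ℝ) : genX Ψ 1 x₀ x = ∫ ξ in x₀..x, (Ψ ξ)⁻¹ := by
  rw [show (1 : ℕ) = 0 + 1 from rfl, genX_succ]
  simp [genX_zero, zpow_neg]

lemma genX_even (Ψ : ℝ → ℂ) (k : ℕ) (x₀ x : ℝ) :
    genX Ψ (2 * k + 2) x₀ x
      = ((2 * k + 2 : ℕ) : ℂ) * ∫ ξ in x₀..x, genX Ψ (2 * k + 1) x₀ ξ * Ψ ξ := by
  rw [show 2 * k + 2 = (2 * k + 1) + 1 from rfl, genX_succ]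
  have he : ((-1 : ℤ) ^ (2 * k + 1 + 1)) = 1 := (Even.neg_one_pow ⟨k + 1, by ring⟩)
  simp [he]

lemma genX_odd (Ψ : ℝ → ℂ) (k : ℕ) (x₀ x : ℝ) :
    genX Ψ (2 * k + 3) x₀ x
      = ((2 * k + 3 : ℕ) : ℂ) * ∫ ξ in x₀..x, genX Ψ (2 * k + 2) x₀ ξ * (Ψ ξ)⁻¹ := by
  rw [show 2 * k + 3 = (2 * k + 2) + 1 from rfl, genX_succ]
  have he : ((-1 : ℤ) ^ (2 * k + 2 + 1)) = -1 := (Odd.neg_one_pow ⟨k + 1, by ring⟩)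
  simp [he, zpow_neg]

lemma key (hc : Continuous Ψ) (h0 : ∀ y, Ψ y ≠ 0) (k : ℕ) (x₀ x : ℝ) :
    ∫ ξ in x₀..x, genX Ψ (2 * k + 1) x₀ ξ * Ψ ξ * genX Ψ 1 ξ x
      = genX Ψ (2 * k + 3) x₀ x / (((2 * k + 2 : ℕ) : ℂ) * ((2 * k + 3 : ℕ) : ℂ)) := by
  have hInv : Continuous fun ξ => (Ψ ξ)⁻¹ := hc.inv₀ h0
  have hAΨ : Continuous fun ξ => genX Ψ (2 * k + 1) x₀ ξ * Ψ ξ :=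
    (genX_cont hc h0 _ x₀).mul hc
  have hV : Continuous (genX Ψ 1 x₀) := genX_cont hc h0 1 x₀
  have hU : Continuous (genX Ψ (2 * k + 2) x₀) := genX_cont hc h0 _ x₀
  have hg1 : ∀ ξ : ℝ, genX Ψ 1 ξ x = genX Ψ 1 x₀ x - genX Ψ 1 x₀ ξ := by
    intro ξ
    rw [genX_one, genX_one, genX_one,
      integral_interval_sub_left (hInv.intervalIntegrable _ _) (hInv.intervalIntegrable _ _)]
  have hsplit :
      ∫ ξ in x₀..x, genX Ψ (2 * k + 1) x₀ ξ * Ψ ξ * genX Ψ 1 ξ x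
        = (∫ ξ in x₀..x, genX Ψ (2 * k + 1) x₀ ξ * Ψ ξ) * genX Ψ 1 x₀ x
          - ∫ ξ in x₀..x, genX Ψ (2 * k + 1) x₀ ξ * Ψ ξ * genX Ψ 1 x₀ ξ := by
    rw [← intervalIntegral.integral_mul_const, ← integral_sub (f := fun ξ => genX Ψ (2 * k + 1) x₀ ξ * Ψ ξ * genX Ψ 1 x₀ x)
      (g := fun ξ => genX Ψ (2 * k + 1) x₀ ξ * Ψ ξ * genX Ψ 1 x₀ ξ) ((hAΨ.mul continuous_const).intervalIntegrable _ _)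
      ((hAΨ.mul hV).intervalIntegrable _ _)]
    exact integral_congr fun ξ _ => by rw [hg1 ξ]; ring
  -- integration by parts
  have hIBP := integral_mul_deriv_eq_deriv_mul
    (u := genX Ψ 1 x₀) (u' := fun ξ => (Ψ ξ)⁻¹)
    (v := genX Ψ (2 * k + 2) x₀)
    (v' := fun ξ => ((2 * k + 2 : ℕ) : ℂ) * (genX Ψ (2 * k + 1) x₀ ξ * Ψ ξ))
    (a := x₀) (b := x)
    (fun ξ _ => by simpa [genX_zero] using genX_hasDerivAt hc h0 0 x₀ ξ)
    (fun ξ _ => by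
      have := genX_hasDerivAt hc h0 (2 * k + 1) x₀ ξ
      have he : ((-1 : ℤ) ^ (2 * k + 1 + 1)) = 1 := (Even.neg_one_pow ⟨k + 1, by ring⟩)
      rw [he, zpow_one] at this
      exact this)
    (hInv.intervalIntegrable _ _)
    ((continuous_const.mul hAΨ).intervalIntegrable _ _)
  have hJ : ((2 * k + 2 : ℕ) : ℂ) * ∫ ξ in x₀..x, genX Ψ (2 * k + 1) x₀ ξ * Ψ ξ * genX Ψ 1 x₀ ξ
      = genX Ψ 1 x₀ x * genX Ψ (2 * k + 2) x₀ x
        - ∫ ξ in x₀..x, (Ψ ξ)⁻¹ * genX Ψ (2 * k + 2) x₀ ξ := by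
    rw [← intervalIntegral.integral_const_mul]
    rw [show (∫ ξ in x₀..x, ((2 * k + 2 : ℕ) : ℂ) * (genX Ψ (2 * k + 1) x₀ ξ * Ψ ξ * genX Ψ 1 x₀ ξ))
        = ∫ ξ in x₀..x, genX Ψ 1 x₀ ξ * (((2 * k + 2 : ℕ) : ℂ) * (genX Ψ (2 * k + 1) x₀ ξ * Ψ ξ))
      from integral_congr fun ξ _ => by ring]
    rw [hIBP, genX_same]
    ring
  have hA : (∫ ξ in x₀..x, genX Ψ (2 * k + 1) x₀ ξ * Ψ ξ)
      = genX Ψ (2 * k + 2) x₀ x / ((2 * k + 2 : ℕ) : ℂ) := by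
    have h2 : ((2 * k + 2 : ℕ) : ℂ) ≠ 0 := by exact_mod_cast Nat.succ_ne_zero (2 * k + 1)
    rw [eq_div_iff h2, genX_even]
    ring
  have hB : (∫ ξ in x₀..x, (Ψ ξ)⁻¹ * genX Ψ (2 * k + 2) x₀ ξ)
      = genX Ψ (2 * k + 3) x₀ x / ((2 * k + 3 : ℕ) : ℂ) := by
    rw [show (∫ ξ in x₀..x, (Ψ ξ)⁻¹ * genX Ψ (2 * k + 2) x₀ ξ)
        = ∫ ξ in x₀..x, genX Ψ (2 * k + 2) x₀ ξ * (Ψ ξ)⁻¹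
      from integral_congr fun ξ _ => by ring]
    have h3 : ((2 * k + 3 : ℕ) : ℂ) ≠ 0 := by exact_mod_cast Nat.succ_ne_zero (2 * k + 2)
    rw [eq_div_iff h3, genX_odd]
    ring
  rw [hsplit, hA]
  rw [hB] at hJ
  have h2 : ((2 * k + 2 : ℕ) : ℂ) ≠ 0 := by exact_mod_cast Nat.succ_ne_zero (2 * k + 1)
  have h3 : ((2 * k + 3 : ℕ) : ℂ) ≠ 0 := by exact_mod_cast Nat.succ_ne_zero (2 * k + 2)
  push_cast at h2 h3 hJ ⊢
  field_simp at hJ ⊢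
  linear_combination (-1 : ℂ) * hJ

end S19

namespace S19

lemma voltPow_eq (hc : Continuous Ψ) (h0 : ∀ y, Ψ y ≠ 0) (k : ℕ) (x₀ : ℝ) : ∀ x : ℝ,
    voltPow (fun u v => Ψ v * genX Ψ 1 u v) k x₀ x
      = Ψ x * genX Ψ (2 * k + 1) x₀ x / ((2 * k + 1).factorial : ℂ) := by
  induction k with
  | zero =>
    intro x
    show Ψ x * genX Ψ 1 x₀ x = _
    norm_num
  | succ k ih =>
    intro x
    have hfac : ((2 * k + 1).factorial : ℂ) ≠ 0 := by
      exact_mod_cast (2 * k + 1).factorial_ne_zero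
    show volt (voltPow (fun u v => Ψ v * genX Ψ 1 u v) k) (fun u v => Ψ v * genX Ψ 1 u v) x₀ x = _
    unfold volt
    have hstep : (∫ ξ in x₀..x,
        voltPow (fun u v => Ψ v * genX Ψ 1 u v) k x₀ ξ * (Ψ x * genX Ψ 1 ξ x))
        = (Ψ x / ((2 * k + 1).factorial : ℂ)) *
            ∫ ξ in x₀..x, genX Ψ (2 * k + 1) x₀ ξ * Ψ ξ * genX Ψ 1 ξ x := by
      rw [← intervalIntegral.integral_const_mul]
      exact intervalIntegral.integral_congr fun ξ _ => by rw [ih ξ]; ring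
    rw [hstep, key hc h0 k x₀ x]
    rw [show 2 * (k + 1) + 1 = 2 * k + 3 from by ring]
    rw [show (2 * k + 3).factorial = (2 * k + 3) * ((2 * k + 2) * (2 * k + 1).factorial) from by
      rw [show 2 * k + 3 = (2 * k + 2) + 1 from rfl, Nat.factorial_succ,
        show 2 * k + 2 = (2 * k + 1) + 1 from rfl, Nat.factorial_succ]]
    have h2 : ((2 * k + 2 : ℕ) : ℂ) ≠ 0 := by exact_mod_cast Nat.succ_ne_zero (2 * k + 1)
    have h3 : ((2 * k + 3 : ℕ) : ℂ) ≠ 0 := by exact_mod_cast Nat.succ_ne_zero (2 * k + 2)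
    push_cast
    push_cast at h2 h3 hfac
    field_simp
    try ring
    try tauto

lemma volt_one_eq (hc : Continuous Ψ) (h0 : ∀ y, Ψ y ≠ 0) (k : ℕ) (x₀ x : ℝ) :
    volt (voltPow (fun u v => Ψ v * genX Ψ 1 u v) k) (fun _ _ => 1) x₀ x
      = genX Ψ (2 * k + 2) x₀ x / ((2 * k + 2).factorial : ℂ) := by
  unfold volt
  have hfac : ((2 * k + 1).factorial : ℂ) ≠ 0 := by
    exact_mod_cast (2 * k + 1).factorial_ne_zero
  have hstep : (∫ ξ in x₀..x, voltPow (fun u v => Ψ v * genX Ψ 1 u v) k x₀ ξ * 1)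
      = (1 / ((2 * k + 1).factorial : ℂ)) *
          ∫ ξ in x₀..x, genX Ψ (2 * k + 1) x₀ ξ * Ψ ξ := by
    rw [← intervalIntegral.integral_const_mul]
    exact intervalIntegral.integral_congr fun ξ _ => by rw [voltPow_eq hc h0 k x₀ ξ]; ring
  rw [hstep]
  have h2 : ((2 * k + 2 : ℕ) : ℂ) ≠ 0 := by exact_mod_cast Nat.succ_ne_zero (2 * k + 1)
  have hA : (∫ ξ in x₀..x, genX Ψ (2 * k + 1) x₀ ξ * Ψ ξ)
      = genX Ψ (2 * k + 2) x₀ x / ((2 * k + 2 : ℕ) : ℂ) := by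
    rw [eq_div_iff h2, genX_even]; ring
  rw [hA, show (2 * k + 2).factorial = (2 * k + 2) * (2 * k + 1).factorial from by
    rw [show 2 * k + 2 = (2 * k + 1) + 1 from rfl, Nat.factorial_succ]]
  push_cast
  push_cast at h2 hfac
  field_simp
  try ring
  try tauto

lemma genX_congr {Φ Ψ : ℝ → ℂ} {s : Set ℝ} (hs : s.OrdConnected) (h : Set.EqOn Ψ Φ s) :
    ∀ n, ∀ x₀ ∈ s, ∀ x ∈ s, genX Ψ n x₀ x = genX Φ n x₀ x := by
  intro n
  induction n with
  | zero => intro x₀ _ x _; rfl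
  | succ n ih =>
    intro x₀ hx₀ x hx
    rw [genX_succ, genX_succ]
    congr 1
    refine intervalIntegral.integral_congr fun ξ hξ => ?_
    have hξs : ξ ∈ s := hs.uIcc_subset hx₀ hx hξ
    rw [ih x₀ hx₀ ξ hξs, h hξs]

lemma voltPow_congr {Φ Ψ : ℝ → ℂ} {s : Set ℝ} (hs : s.OrdConnected) (h : Set.EqOn Ψ Φ s) :
    ∀ k, ∀ x₀ ∈ s, ∀ x ∈ s,
      voltPow (fun u v => Ψ v * genX Ψ 1 u v) k x₀ x
        = voltPow (fun u v => Φ v * genX Φ 1 u v) k x₀ x := by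
  intro k
  induction k with
  | zero =>
    intro x₀ hx₀ x hx
    show Ψ x * genX Ψ 1 x₀ x = Φ x * genX Φ 1 x₀ x
    rw [h hx, genX_congr hs h 1 x₀ hx₀ x hx]
  | succ k ih =>
    intro x₀ hx₀ x hx
    show volt _ _ x₀ x = volt _ _ x₀ x
    unfold volt
    refine intervalIntegral.integral_congr fun ξ hξ => ?_
    have hξs : ξ ∈ s := hs.uIcc_subset hx₀ hx hξ
    show voltPow (fun u v => Ψ v * genX Ψ 1 u v) k x₀ ξ * (Ψ x * genX Ψ 1 ξ x)
        = voltPow (fun u v => Φ v * genX Φ 1 u v) k x₀ ξ * (Φ x * genX Φ 1 ξ x)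
    rw [ih x₀ hx₀ ξ hξs, h hx, genX_congr hs h 1 ξ hξs x hx]

end S19

theorem stmt_19 (a b : ℝ) (Φ : ℝ → ℂ) (hΦc : ContinuousOn Φ (Set.Icc a b))
    (hΦ0 : ∀ y ∈ Set.Icc a b, Φ y ≠ 0) (n : ℕ) (hn : 1 ≤ n)
    (x₀ x : ℝ) (hx₀ : x₀ ∈ Set.Icc a b) (hx : x ∈ Set.Icc a b) :
    voltPow (fun u v => Φ v * genX Φ 1 u v) (n - 1) x₀ x =
      Φ x * genX Φ (2 * n - 1) x₀ x / ((2 * n - 1).factorial : ℂ) ∧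
    volt (voltPow (fun u v => Φ v * genX Φ 1 u v) (n - 1)) (fun _ _ => 1) x₀ x =
      genX Φ (2 * n) x₀ x / ((2 * n).factorial : ℂ) := by
  have hab : a ≤ b := hx₀.1.trans hx₀.2
  have hΨc : Continuous fun y => Φ ((Set.projIcc a b hab y : Set.Icc a b) : ℝ) :=
    hΦc.comp_continuous (continuous_subtype_val.comp continuous_projIcc)
      fun y => (Set.projIcc a b hab y).2
  set Ψ : ℝ → ℂ := fun y => Φ ((Set.projIcc a b hab y : Set.Icc a b) : ℝ) with hΨdef
  have hΨ0 : ∀ y, Ψ y ≠ 0 := fun y => hΦ0 _ (Set.projIcc a b hab y).2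
  have hEq : Set.EqOn Ψ Φ (Set.Icc a b) := fun y hy => by
    simp only [hΨdef, Set.projIcc_of_mem hab hy]
  have hs : (Set.Icc a b).OrdConnected := Set.ordConnected_Icc
  obtain ⟨m, rfl⟩ : ∃ m, n = m + 1 := ⟨n - 1, (Nat.succ_pred_eq_of_pos hn).symm⟩
  have hi1 : (m + 1) - 1 = m := rfl
  have hi2 : 2 * (m + 1) - 1 = 2 * m + 1 := by omega
  have hi3 : 2 * (m + 1) = 2 * m + 2 := by omega
  rw [hi1, hi2, hi3]
  constructor
  · rw [← S19.voltPow_congr hs hEq m x₀ hx₀ x hx, S19.voltPow_eq hΨc hΨ0 m x₀ x,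
      hEq hx, S19.genX_congr hs hEq (2 * m + 1) x₀ hx₀ x hx]
  · have hv : volt (voltPow (fun u v => Φ v * genX Φ 1 u v) m) (fun _ _ => 1) x₀ x
        = volt (voltPow (fun u v => Ψ v * genX Ψ 1 u v) m) (fun _ _ => 1) x₀ x := by
      unfold volt
      refine intervalIntegral.integral_congr fun ξ hξ => ?_
      rw [S19.voltPow_congr hs hEq m x₀ hx₀ ξ (hs.uIcc_subset hx₀ hx hξ)]
    rw [hv, S19.volt_one_eq hΨc hΨ0 m x₀ x,
      S19.genX_congr hs hEq (2 * m + 2) x₀ hx₀ x hx]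
end
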